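/- Eigenfunction identity: if Hφ = μφ on ℓ²(M) and u solves Hu = 1, then for any g ∈ ℓ²(M), Σ_{n∈M}(1/u_n - μ) φ_n² g_n² + Σ_{n∈M} Σ_{i=1}^d u_{n+e_i} u_n (g_{n+e_i}φ_{n+e_i}/u_{n+e_i} - g_n φ_n/u_n)² = Σ_{n∈M} Σ_{i=1}^d φ_{n+e_i} φ_n (g_{n+e_i} - g_n)². -/

import Mathlib

open Finset Real

noncomputable section

/-- The `i`-th standard basis vector in the discrete torus `(ZMod K)^d`. -/
def e (d K : ℕ) (i : Fin d) : Fin d → ZMod K :=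
  fun j => if j = i then 1 else 0

/-- The periodic discrete Schrödinger operator `H = -Δ + V` on `(ZMod K)^d`:
`(Hφ)_n = -∑_{|m-n|₁=1}(φ_m - φ_n) + v_n φ_n`. -/
def opH (d K : ℕ) (v φ : (Fin d → ZMod K) → ℝ) (n : Fin d → ZMod K) : ℝ :=
  (∑ i : Fin d, (2 * φ n - φ (n + e d K i) - φ (n - e d K i))) + v n * φ n

lemma sum_shift {d K : ℕ} [NeZero K] (c : Fin d → ZMod K)
    (F : (Fin d → ZMod K) → ℝ) :
    ∑ n : Fin d → ZMod K, F (n + c) = ∑ n : Fin d → ZMod K, F n :=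
  Fintype.sum_equiv (Equiv.addRight c) _ _ (fun _ => rfl)

lemma per_edge {d K : ℕ} [NeZero K] (w h : (Fin d → ZMod K) → ℝ)
    (c : Fin d → ZMod K) :
    ∑ n : Fin d → ZMod K, (w (n + c) * h (n + c) - w n * h n) ^ 2
    = ∑ n : Fin d → ZMod K, (w (n + c) * w n * (h (n + c) - h n) ^ 2
        + (2 * w n - w (n + c) - w (n - c)) * (w n * h n ^ 2)) := by
  have hG := sum_shift c (fun n => (w n) ^ 2 * (h n) ^ 2)
  have hG' := sum_shift c (fun n => w (n - c) * w n * (h n) ^ 2)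
  have key : ∀ n : Fin d → ZMod K,
      (w (n + c) * h (n + c) - w n * h n) ^ 2
      = (w (n + c) * w n * (h (n + c) - h n) ^ 2
          + (2 * w n - w (n + c) - w (n - c)) * (w n * h n ^ 2))
        + ((w (n + c)) ^ 2 * (h (n + c)) ^ 2 - (w n) ^ 2 * (h n) ^ 2)
        - (w (n + c - c) * w (n + c) * (h (n + c)) ^ 2
            - w (n - c) * w n * (h n) ^ 2) := by
    intro n
    rw [add_sub_cancel_right]
    ring
  calc ∑ n : Fin d → ZMod K, (w (n + c) * h (n + c) - w n * h n) ^ 2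
      = (∑ n : Fin d → ZMod K, (w (n + c) * w n * (h (n + c) - h n) ^ 2
          + (2 * w n - w (n + c) - w (n - c)) * (w n * h n ^ 2)))
        + ((∑ n : Fin d → ZMod K, (w (n + c)) ^ 2 * (h (n + c)) ^ 2)
            - ∑ n : Fin d → ZMod K, (w n) ^ 2 * (h n) ^ 2)
        - ((∑ n : Fin d → ZMod K, w (n + c - c) * w (n + c) * (h (n + c)) ^ 2)
            - ∑ n : Fin d → ZMod K, w (n - c) * w n * (h n) ^ 2) := by
        rw [← Finset.sum_sub_distrib, ← Finset.sum_sub_distrib,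
          ← Finset.sum_add_distrib, ← Finset.sum_sub_distrib]
        exact Finset.sum_congr rfl fun n _ => key n
    _ = _ := by
        rw [hG, hG']
        ring

lemma ground {d K : ℕ} [NeZero K] (v w h : (Fin d → ZMod K) → ℝ) :
    (∑ n : Fin d → ZMod K, ∑ i : Fin d,
        (w (n + e d K i) * h (n + e d K i) - w n * h n) ^ 2)
      + ∑ n : Fin d → ZMod K, v n * (w n * h n) ^ 2
    = (∑ n : Fin d → ZMod K, ∑ i : Fin d,
        w (n + e d K i) * w n * (h (n + e d K i) - h n) ^ 2)
      + ∑ n : Fin d → ZMod K, opH d K v w n * (w n * h n ^ 2) := by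
  have h1 : (∑ n : Fin d → ZMod K, ∑ i : Fin d,
      (w (n + e d K i) * h (n + e d K i) - w n * h n) ^ 2)
    = (∑ n : Fin d → ZMod K, ∑ i : Fin d,
        w (n + e d K i) * w n * (h (n + e d K i) - h n) ^ 2)
      + ∑ n : Fin d → ZMod K, ∑ i : Fin d,
        (2 * w n - w (n + e d K i) - w (n - e d K i)) * (w n * h n ^ 2) := by
    calc (∑ n : Fin d → ZMod K, ∑ i : Fin d,
        (w (n + e d K i) * h (n + e d K i) - w n * h n) ^ 2)
        = ∑ i : Fin d, ∑ n : Fin d → ZMod K,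
            (w (n + e d K i) * h (n + e d K i) - w n * h n) ^ 2 :=
          Finset.sum_comm
      _ = ∑ i : Fin d, ∑ n : Fin d → ZMod K,
            (w (n + e d K i) * w n * (h (n + e d K i) - h n) ^ 2
              + (2 * w n - w (n + e d K i) - w (n - e d K i)) * (w n * h n ^ 2)) :=
          Finset.sum_congr rfl fun i _ => per_edge w h (e d K i)
      _ = (∑ i : Fin d, ∑ n : Fin d → ZMod K,
            w (n + e d K i) * w n * (h (n + e d K i) - h n) ^ 2)
          + ∑ i : Fin d, ∑ n : Fin d → ZMod K,
            (2 * w n - w (n + e d K i) - w (n - e d K i)) * (w n * h n ^ 2) := by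
          simp only [Finset.sum_add_distrib]
      _ = _ := congrArg₂ (· + ·) Finset.sum_comm Finset.sum_comm
  rw [h1]
  simp only [opH]
  rw [add_assoc]
  congr 1
  rw [← Finset.sum_add_distrib]
  refine Finset.sum_congr rfl fun n _ => ?_
  rw [add_mul, Finset.sum_mul]
  ring

/-- Eigenfunction identity: if `Hφ = μφ` and `Hu = 1`, then for any `g`,
`∑(1/u - μ)φ²g² + ∑∑ u_{n+e_i}u_n (gφ/u)_{gradient}² = ∑∑ φ_{n+e_i}φ_n (∇g)²`. -/
theorem eigenfunction_identity (d K : ℕ) [NeZero K]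
    (v : (Fin d → ZMod K) → ℝ) (hv : ∀ n, 0 ≤ v n) (hv0 : ∃ n, v n ≠ 0)
    (u : (Fin d → ZMod K) → ℝ) (hupos : ∀ n, 0 < u n)
    (hu : ∀ n, opH d K v u n = 1)
    (μ : ℝ) (φ : (Fin d → ZMod K) → ℝ) (hφ : φ ≠ 0)
    (heig : ∀ n, opH d K v φ n = μ * φ n)
    (g : (Fin d → ZMod K) → ℝ) :
    (∑ n : Fin d → ZMod K, (1 / u n - μ) * (φ n) ^ 2 * (g n) ^ 2) +
      (∑ n : Fin d → ZMod K, ∑ i : Fin d,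
        u (n + e d K i) * u n *
          (g (n + e d K i) * φ (n + e d K i) / u (n + e d K i) -
            g n * φ n / u n) ^ 2) =
      ∑ n : Fin d → ZMod K, ∑ i : Fin d,
        φ (n + e d K i) * φ n * (g (n + e d K i) - g n) ^ 2 := by
  have hu0 : ∀ n, u n ≠ 0 := fun n => (hupos n).ne'
  have G1 := ground v φ g
  have G2 := ground v u (fun n => g n * φ n / u n)
  simp only [heig, hu, one_mul] at G1 G2
  -- rewrite the common left-hand sides of G1 and G2 to an identical form
  have L1 : (∑ n : Fin d → ZMod K, ∑ i : Fin d,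
      (φ (n + e d K i) * g (n + e d K i) - φ n * g n) ^ 2)
      = ∑ n : Fin d → ZMod K, ∑ i : Fin d,
        (g (n + e d K i) * φ (n + e d K i) - g n * φ n) ^ 2 := by
    refine Finset.sum_congr rfl fun n _ => Finset.sum_congr rfl fun i _ => ?_
    ring
  have L2 : (∑ n : Fin d → ZMod K, ∑ i : Fin d,
      (u (n + e d K i) * (g (n + e d K i) * φ (n + e d K i) / u (n + e d K i))
        - u n * (g n * φ n / u n)) ^ 2)
      = ∑ n : Fin d → ZMod K, ∑ i : Fin d,
        (g (n + e d K i) * φ (n + e d K i) - g n * φ n) ^ 2 := by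
    refine Finset.sum_congr rfl fun n _ => Finset.sum_congr rfl fun i _ => ?_
    rw [mul_div_cancel₀ _ (hu0 _), mul_div_cancel₀ _ (hu0 _)]
  have V1 : (∑ n : Fin d → ZMod K, v n * (φ n * g n) ^ 2)
      = ∑ n : Fin d → ZMod K, v n * (g n * φ n) ^ 2 := by
    refine Finset.sum_congr rfl fun n _ => ?_; ring
  have V2 : (∑ n : Fin d → ZMod K, v n * (u n * (g n * φ n / u n)) ^ 2)
      = ∑ n : Fin d → ZMod K, v n * (g n * φ n) ^ 2 := by
    refine Finset.sum_congr rfl fun n _ => ?_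
    rw [mul_div_cancel₀ _ (hu0 _)]
  rw [L1, V1] at G1
  rw [L2, V2] at G2
  have key := G1.symm.trans G2
  have e1 : (∑ n : Fin d → ZMod K, (1 / u n - μ) * (φ n) ^ 2 * (g n) ^ 2)
      = (∑ n : Fin d → ZMod K, u n * (g n * φ n / u n) ^ 2)
        - ∑ n : Fin d → ZMod K, μ * φ n * (φ n * g n ^ 2) := by
    rw [← Finset.sum_sub_distrib]
    refine Finset.sum_congr rfl fun n _ => ?_
    rw [div_pow]
    have h2 : u n * ((g n * φ n) ^ 2 / (u n) ^ 2) = (g n * φ n) ^ 2 / u n := by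
      rw [pow_two (u n), ← div_div, mul_div_cancel₀ _ (hu0 n)]
    rw [h2]
    field_simp [hu0 n]
  rw [e1]
  linarith [key]
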